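/- Let d ≥ 1 be an integer and let x : [n] → {−1, 0, +1} satisfy |Σ_{h=i}^{j} x_h| ≤ d + unq(i,j) − 3 for every pair 1 ≤ i ≤ j ≤ n, where unq(i,j) denotes the number of indices h with i ≤ h ≤ j and x_h = 0. Then there exists y : [n] → {−1, +1} with y_h = x_h whenever x_h ≠ 0 and |Σ_{h=i}^{j} y_h| ≤ d for every pair 1 ≤ i ≤ j ≤ n. -/

import Mathlib

namespace Stmt13Aux

def SS (x : ℕ → ℤ) (k : ℕ) : ℤ := ∑ i ∈ Finset.range k, x i

def UU (x : ℕ → ℤ) (k : ℕ) : ℤ := (((Finset.range k).filter fun i => x i = 0)).card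

def AA (x : ℕ → ℤ) (k : ℕ) : ℤ := SS x k - UU x k
def DD (x : ℕ → ℤ) (k : ℕ) : ℤ := SS x k + UU x k

def pw (x : ℕ → ℤ) (lo : ℤ) : ℕ → ℤ
  | 0 => 0
  | k+1 => if x k = 0 then (if lo ≤ pw x lo k - 1 then pw x lo k - 1 else pw x lo k + 1)
           else (if lo ≤ pw x lo k + x k then pw x lo k + x k else pw x lo k + x k + 2)

def qw (x : ℕ → ℤ) (hi : ℤ) : ℕ → ℤ
  | 0 => 0
  | k+1 => if x k = 0 then (if qw x hi k + 1 ≤ hi then qw x hi k + 1 else qw x hi k - 1)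
           else (if qw x hi k + x k ≤ hi then qw x hi k + x k else qw x hi k + x k - 2)

def bw (x : ℕ → ℤ) (lo hi : ℤ) (n : ℕ) : ℕ → ℤ
  | 0 => qw x hi n
  | j+1 => if x (n - j - 1) = 0 then
      (if pw x lo (n - j - 1) ≤ bw x lo hi n j - 1 then bw x lo hi n j - 1 else bw x lo hi n j + 1)
    else bw x lo hi n j - x (n - j - 1)

lemma SS_succ (x : ℕ → ℤ) (k : ℕ) : SS x (k+1) = SS x k + x k :=
  Finset.sum_range_succ x k

lemma UU_succ (x : ℕ → ℤ) (k : ℕ) :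
    UU x (k+1) = UU x k + (if x k = 0 then 1 else 0) := by
  unfold UU
  rw [Finset.range_add_one, Finset.filter_insert]
  split_ifs with h
  · rw [Finset.card_insert_of_notMem (by simp)]
    push_cast; ring
  · simp

lemma AA_succ_zero (x : ℕ → ℤ) (k : ℕ) (h : x k = 0) : AA x (k+1) = AA x k - 1 := by
  unfold AA; rw [SS_succ, UU_succ, if_pos h, h]; ring

lemma AA_succ_ne (x : ℕ → ℤ) (k : ℕ) (h : ¬ x k = 0) : AA x (k+1) = AA x k + x k := by
  unfold AA; rw [SS_succ, UU_succ, if_neg h]; ring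

lemma DD_succ_zero (x : ℕ → ℤ) (k : ℕ) (h : x k = 0) : DD x (k+1) = DD x k + 1 := by
  unfold DD; rw [SS_succ, UU_succ, if_pos h, h]; ring

lemma DD_succ_ne (x : ℕ → ℤ) (k : ℕ) (h : ¬ x k = 0) : DD x (k+1) = DD x k + x k := by
  unfold DD; rw [SS_succ, UU_succ, if_neg h]; ring

lemma AA_le_DD (x : ℕ → ℤ) (k : ℕ) : AA x k ≤ DD x k := by
  unfold AA DD
  have : (0:ℤ) ≤ UU x k := by unfold UU; positivity
  omega

def Good (x : ℕ → ℤ) (lo hi : ℤ) (k : ℕ) : Prop :=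
  lo ≤ pw x lo k ∧ qw x hi k ≤ hi ∧ pw x lo k ≤ qw x hi k ∧
  (qw x hi k - pw x lo k) % 2 = 0 ∧
  (pw x lo k ≤ AA x k ∨ ∃ i ≤ k, pw x lo k ≤ AA x k + lo + 2 - AA x i) ∧
  (DD x k ≤ qw x hi k ∨ ∃ i ≤ k, DD x k - DD x i + hi - 2 ≤ qw x hi k)

lemma good (x : ℕ → ℤ) (lo hi : ℤ) (n : ℕ)
    (hlo : lo ≤ 0) (hhi : 0 ≤ hi) (hlt : lo < hi)
    (hxv : ∀ k < n, x k = -1 ∨ x k = 0 ∨ x k = 1)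
    (hup : ∀ k < n, x k = 1 → AA x k ≤ hi - 1 ∧ ∀ i ≤ k, AA x k - AA x i ≤ hi - lo - 3)
    (hdn : ∀ k < n, x k = -1 → lo + 1 ≤ DD x k ∧ ∀ i ≤ k, DD x i - DD x k ≤ hi - lo - 3) :
    ∀ k, k ≤ n → Good x lo hi k := by
  intro k
  induction k with
  | zero =>
    intro _
    have e1 : pw x lo 0 = 0 := rfl
    have e2 : qw x hi 0 = 0 := rfl
    have e3 : AA x 0 = 0 := by simp [AA, SS, UU]
    have e4 : DD x 0 = 0 := by simp [DD, SS, UU]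
    exact ⟨by omega, by omega, by omega, by omega, Or.inl (by omega), Or.inl (by omega)⟩
  | succ k IH =>
    intro hk1
    have hk : k < n := by omega
    obtain ⟨g1, g2, g3, g4, g5, g6⟩ := IH (by omega)
    rcases hxv k hk with hxk | hxk | hxk
    · -- x k = -1 : forced down step
      have hne : ¬ x k = 0 := by rw [hxk]; norm_num
      have hA : AA x (k+1) = AA x k - 1 := by rw [AA_succ_ne x k hne, hxk]; ring
      have hD : DD x (k+1) = DD x k - 1 := by rw [DD_succ_ne x k hne, hxk]; ring
      have hq : qw x hi (k+1) = qw x hi k - 1 := by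
        rw [qw, if_neg hne, hxk, if_pos (show qw x hi k + (-1) ≤ hi by omega)]; ring
      have hp : pw x lo (k+1) = if lo ≤ pw x lo k - 1 then pw x lo k - 1 else pw x lo k + 1 := by
        rw [pw, if_neg hne, hxk]
        split_ifs with h1 h2 <;> omega
      obtain ⟨hdn1, hdn2⟩ := hdn k hk hxk
      by_cases h1 : lo ≤ pw x lo k - 1
      · rw [if_pos h1] at hp
        refine ⟨by omega, by omega, by omega, by omega, ?_, ?_⟩
        · rcases g5 with h | ⟨i, hi1, hi2⟩
          · exact Or.inl (by omega)
          · exact Or.inr ⟨i, by omega, by omega⟩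
        · rcases g6 with h | ⟨i, hi1, hi2⟩
          · exact Or.inl (by omega)
          · exact Or.inr ⟨i, by omega, by omega⟩
      · rw [if_neg h1] at hp
        have hpl : pw x lo k = lo := by omega
        have hne2 : pw x lo k ≠ qw x hi k := by
          intro hcontra
          rcases g6 with h | ⟨i, hi1, hi2⟩
          · omega
          · have hii : DD x i - DD x k ≤ hi - lo - 3 := hdn2 i hi1
            omega
        refine ⟨by omega, by omega, by omega, by omega, ?_, ?_⟩
        · exact Or.inr ⟨k+1, le_refl _, by omega⟩
        · rcases g6 with h | ⟨i, hi1, hi2⟩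
          · exact Or.inl (by omega)
          · exact Or.inr ⟨i, by omega, by omega⟩
    · -- x k = 0 : free step
      have hA : AA x (k+1) = AA x k - 1 := AA_succ_zero x k hxk
      have hD : DD x (k+1) = DD x k + 1 := DD_succ_zero x k hxk
      have hp : pw x lo (k+1) = if lo ≤ pw x lo k - 1 then pw x lo k - 1 else pw x lo k + 1 := by
        rw [pw, if_pos hxk]
      have hq : qw x hi (k+1) = if qw x hi k + 1 ≤ hi then qw x hi k + 1 else qw x hi k - 1 := by
        rw [qw, if_pos hxk]
      have inv1 : pw x lo (k+1) ≤ AA x (k+1) ∨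
          ∃ i ≤ k+1, pw x lo (k+1) ≤ AA x (k+1) + lo + 2 - AA x i := by
        by_cases h1 : lo ≤ pw x lo k - 1
        · rw [if_pos h1] at hp
          rcases g5 with h | ⟨i, hi1, hi2⟩
          · exact Or.inl (by omega)
          · exact Or.inr ⟨i, by omega, by omega⟩
        · rw [if_neg h1] at hp
          exact Or.inr ⟨k+1, le_refl _, by omega⟩
      have inv2 : DD x (k+1) ≤ qw x hi (k+1) ∨
          ∃ i ≤ k+1, DD x (k+1) - DD x i + hi - 2 ≤ qw x hi (k+1) := by
        by_cases h2 : qw x hi k + 1 ≤ hi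
        · rw [if_pos h2] at hq
          rcases g6 with h | ⟨i, hi1, hi2⟩
          · exact Or.inl (by omega)
          · exact Or.inr ⟨i, by omega, by omega⟩
        · rw [if_neg h2] at hq
          exact Or.inr ⟨k+1, le_refl _, by omega⟩
      refine ⟨?_, ?_, ?_, ?_, inv1, inv2⟩ <;>
        (split_ifs at hp hq with h1 h2 <;> omega)
    · -- x k = 1 : forced up step
      have hne : ¬ x k = 0 := by rw [hxk]; norm_num
      have hA : AA x (k+1) = AA x k + 1 := by rw [AA_succ_ne x k hne, hxk]
      have hD : DD x (k+1) = DD x k + 1 := by rw [DD_succ_ne x k hne, hxk]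
      have hp : pw x lo (k+1) = pw x lo k + 1 := by
        rw [pw, if_neg hne, hxk, if_pos (show lo ≤ pw x lo k + 1 by omega)]
      have hq : qw x hi (k+1) = if qw x hi k + 1 ≤ hi then qw x hi k + 1 else qw x hi k - 1 := by
        rw [qw, if_neg hne, hxk]
        split_ifs with h1 h2 <;> omega
      obtain ⟨hup1, hup2⟩ := hup k hk hxk
      by_cases h1 : qw x hi k + 1 ≤ hi
      · rw [if_pos h1] at hq
        refine ⟨by omega, by omega, by omega, by omega, ?_, ?_⟩
        · rcases g5 with h | ⟨i, hi1, hi2⟩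
          · exact Or.inl (by omega)
          · exact Or.inr ⟨i, by omega, by omega⟩
        · rcases g6 with h | ⟨i, hi1, hi2⟩
          · exact Or.inl (by omega)
          · exact Or.inr ⟨i, by omega, by omega⟩
      · rw [if_neg h1] at hq
        have hqh : qw x hi k = hi := by omega
        have hne2 : pw x lo k ≠ qw x hi k := by
          intro hcontra
          rcases g5 with h | ⟨i, hi1, hi2⟩
          · omega
          · have hii : AA x k - AA x i ≤ hi - lo - 3 := hup2 i hi1
            omega
        refine ⟨by omega, by omega, by omega, by omega, ?_, ?_⟩
        · rcases g5 with h | ⟨i, hi1, hi2⟩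
          · exact Or.inl (by omega)
          · exact Or.inr ⟨i, by omega, by omega⟩
        · exact Or.inr ⟨k+1, le_refl _, by omega⟩


lemma bw_good (x : ℕ → ℤ) (lo hi : ℤ) (n : ℕ)
    (hgood : ∀ k, k ≤ n → Good x lo hi k)
    (hxv : ∀ k < n, x k = -1 ∨ x k = 0 ∨ x k = 1) :
    ∀ j, j ≤ n → pw x lo (n-j) ≤ bw x lo hi n j ∧ bw x lo hi n j ≤ qw x hi (n-j) ∧
      (bw x lo hi n j - pw x lo (n-j)) % 2 = 0 := by
  intro j
  induction j with
  | zero =>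
    intro _
    have hb : bw x lo hi n 0 = qw x hi n := rfl
    obtain ⟨g1, g2, g3, g4, g5, g6⟩ := hgood n (le_refl n)
    simp only [Nat.sub_zero]
    omega
  | succ j IH =>
    intro hj1
    obtain ⟨b1, b2, b3⟩ := IH (by omega)
    set k := n - j - 1 with hkdef
    have hkn : k < n := by omega
    have hnj : n - j = k + 1 := by omega
    rw [hnj] at b1 b2 b3
    have hnj2 : n - (j+1) = k := by omega
    rw [hnj2]
    obtain ⟨g1, g2, g3, g4, g5, g6⟩ := hgood k (by omega)
    have hb : bw x lo hi n (j+1) = if x k = 0 then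
        (if pw x lo k ≤ bw x lo hi n j - 1 then bw x lo hi n j - 1 else bw x lo hi n j + 1)
      else bw x lo hi n j - x k := by
      rw [bw]
    rcases hxv k hkn with hxk | hxk | hxk
    · have hne : ¬ x k = 0 := by rw [hxk]; norm_num
      rw [if_neg hne, hxk] at hb
      have hq : qw x hi (k+1) = qw x hi k - 1 := by
        rw [qw, if_neg hne, hxk, if_pos (show qw x hi k + (-1) ≤ hi by omega)]; ring
      have hp : pw x lo (k+1) = if lo ≤ pw x lo k - 1 then pw x lo k - 1 else pw x lo k + 1 := by
        rw [pw, if_neg hne, hxk]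
        split_ifs with h1 h2 <;> omega
      split_ifs at hp with h1 <;> omega
    · rw [if_pos hxk] at hb
      have hp : pw x lo (k+1) = if lo ≤ pw x lo k - 1 then pw x lo k - 1 else pw x lo k + 1 := by
        rw [pw, if_pos hxk]
      have hq : qw x hi (k+1) = if qw x hi k + 1 ≤ hi then qw x hi k + 1 else qw x hi k - 1 := by
        rw [qw, if_pos hxk]
      split_ifs at hb hp hq with h1 h2 h3 <;> omega
    · have hne : ¬ x k = 0 := by rw [hxk]; norm_num
      rw [if_neg hne, hxk] at hb
      have hp : pw x lo (k+1) = pw x lo k + 1 := by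
        rw [pw, if_neg hne, hxk, if_pos (show lo ≤ pw x lo k + 1 by omega)]
      have hq : qw x hi (k+1) = if qw x hi k + 1 ≤ hi then qw x hi k + 1 else qw x hi k - 1 := by
        rw [qw, if_neg hne, hxk]
        split_ifs with h1 h2 <;> omega
      split_ifs at hq with h1 <;> omega

lemma key (x : ℕ → ℤ) (lo hi : ℤ) (n : ℕ)
    (hlo : lo ≤ 0) (hhi : 0 ≤ hi) (hlt : lo < hi)
    (hxv : ∀ k < n, x k = -1 ∨ x k = 0 ∨ x k = 1)
    (hup : ∀ k < n, x k = 1 → AA x k ≤ hi - 1 ∧ ∀ i ≤ k, AA x k - AA x i ≤ hi - lo - 3)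
    (hdn : ∀ k < n, x k = -1 → lo + 1 ≤ DD x k ∧ ∀ i ≤ k, DD x i - DD x k ≤ hi - lo - 3) :
    ∃ P : ℕ → ℤ,
      (∀ k < n, (x k = 0 → P (k+1) - P k = 1 ∨ P (k+1) - P k = -1) ∧
        (x k ≠ 0 → P (k+1) = P k + x k)) ∧
      (∀ k, k ≤ n → lo ≤ P k ∧ P k ≤ hi) := by
  have hgood := good x lo hi n hlo hhi hlt hxv hup hdn
  have hbw := bw_good x lo hi n hgood hxv
  refine ⟨fun k => bw x lo hi n (n - k), ?_, ?_⟩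
  · intro k hk
    dsimp only
    have hj : n - k = (n - k - 1) + 1 := by omega
    set j := n - k - 1 with hjdef
    have hjk : n - j - 1 = k := by omega
    have hnk1 : n - (k+1) = j := by omega
    have hb : bw x lo hi n (j+1) = if x k = 0 then
        (if pw x lo k ≤ bw x lo hi n j - 1 then bw x lo hi n j - 1 else bw x lo hi n j + 1)
      else bw x lo hi n j - x k := by
      rw [bw, hjk]
    constructor
    · intro hxk
      rw [if_pos hxk] at hb
      rw [hj, hnk1, hb]
      split_ifs with h1 <;> omega
    · intro hxk
      rw [if_neg hxk] at hb
      rw [hj, hnk1, hb]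
      ring
  · intro k hk
    dsimp only
    have h1 := hbw (n - k) (by omega)
    have h2 : n - (n - k) = k := by omega
    rw [h2] at h1
    obtain ⟨g1, g2, _, _, _, _⟩ := hgood k hk
    omega


lemma sum_Icc_eq (x : ℕ → ℤ) (i j : ℕ) (hij : i ≤ j) :
    ∑ h ∈ Finset.Icc i j, x h = SS x (j+1) - SS x i := by
  unfold SS
  rw [← Finset.Ico_add_one_right_eq_Icc, Finset.sum_Ico_eq_sub _ (by omega)]

lemma card_Icc_eq (x : ℕ → ℤ) (i j : ℕ) (hij : i ≤ j) :
    ((((Finset.Icc i j).filter fun h => x h = 0)).card : ℤ) = UU x (j+1) - UU x i := by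
  unfold UU
  have hsplit : Finset.range (j+1) = Finset.range i ∪ Finset.Ico i (j+1) := by
    rw [Finset.range_eq_Ico, Finset.range_eq_Ico]
    exact (Finset.Ico_union_Ico_eq_Ico (Nat.zero_le i) (by omega)).symm
  have hdisj : Disjoint ((Finset.range i).filter fun h => x h = 0)
      ((Finset.Ico i (j+1)).filter fun h => x h = 0) := by
    rw [Finset.range_eq_Ico]
    exact Finset.disjoint_filter_filter (Finset.Ico_disjoint_Ico_consecutive 0 i (j+1))
  rw [hsplit, Finset.filter_union, Finset.card_union_of_disjoint hdisj, ← Finset.Ico_add_one_right_eq_Icc]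
  push_cast
  ring

end Stmt13Aux

/-- Claim (i'): let `d ≥ 1` and `x : [n] → {-1,0,+1}` (positions `0, …, n-1`)
satisfy `|disc(i,j)| ≤ d + unq(i,j) - 3` for every interval `[i,j] ⊆ [n]`,
where `unq(i,j)` is the number of zero coordinates in `[i,j]`. Then `x` has a
`±1`-completion with `|disc(i,j)| ≤ d` for every interval. -/
theorem stmt_13 (n : ℕ) (d : ℕ) (hd : 1 ≤ d) (x : ℕ → ℤ)
    (hx : ∀ h < n, x h = -1 ∨ x h = 0 ∨ x h = 1)
    (hdisc : ∀ i j, i ≤ j → j < n →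
      |∑ h ∈ Finset.Icc i j, x h| ≤
        (d : ℤ) + ((Finset.Icc i j).filter fun h => x h = 0).card - 3) :
    ∃ y : ℕ → ℤ, (∀ h < n, y h = -1 ∨ y h = 1) ∧
      (∀ h < n, x h ≠ 0 → y h = x h) ∧
      ∀ i j, i ≤ j → j < n → |∑ h ∈ Finset.Icc i j, y h| ≤ (d : ℤ) := by
  classical
  open Stmt13Aux in
  rcases Nat.eq_zero_or_pos n with hn | hn
  · subst hn
    exact ⟨fun _ => 1, fun h hh => absurd hh (by omega), fun h hh => absurd hh (by omega),
      fun i j _ hj => absurd hj (by omega)⟩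
  -- singleton facts
  have hsingle : ∀ k < n, (x k = 0 → (2:ℤ) ≤ d) ∧ (x k ≠ 0 → (4:ℤ) ≤ d) := by
    intro k hk
    have h1 := hdisc k k (le_refl k) hk
    rw [Finset.Icc_self, Finset.sum_singleton, Finset.filter_singleton] at h1
    rcases hx k hk with hxk | hxk | hxk
    · rw [hxk] at h1
      norm_num at h1
      exact ⟨fun hc => by rw [hxk] at hc; norm_num at hc, fun _ => by omega⟩
    · rw [hxk] at h1
      norm_num at h1
      exact ⟨fun _ => by omega, fun hc => absurd hxk hc⟩
    · rw [hxk] at h1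
      norm_num at h1
      exact ⟨fun hc => by rw [hxk] at hc; norm_num at hc, fun _ => by omega⟩
  have hAD : ∀ i k : ℕ, i < k → k ≤ n →
      AA x k - AA x i ≤ (d:ℤ) - 3 ∧ DD x i - DD x k ≤ (d:ℤ) - 3 := by
    intro i k hik hkn
    have h1 := hdisc i (k-1) (by omega) (by omega)
    have e1 : ∑ h ∈ Finset.Icc i (k-1), x h = SS x k - SS x i := by
      have := sum_Icc_eq x i (k-1) (by omega)
      rwa [show k - 1 + 1 = k by omega] at this
    have e2 : (((Finset.Icc i (k-1)).filter fun h => x h = 0).card : ℤ) = UU x k - UU x i := by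
      have := card_Icc_eq x i (k-1) (by omega)
      rwa [show k - 1 + 1 = k by omega] at this
    rw [e1, e2] at h1
    rw [abs_le] at h1
    unfold AA DD
    omega
  have hTne : ((Finset.range (n+1)).image (DD x)).Nonempty :=
    ⟨DD x 0, Finset.mem_image_of_mem _ (Finset.mem_range.mpr (by omega))⟩
  set m := ((Finset.range (n+1)).image (DD x)).min' hTne with hmdef
  have hm1 : ∀ k, k ≤ n → m ≤ DD x k := by
    intro k hk
    exact Finset.min'_le _ _ (Finset.mem_image_of_mem _ (Finset.mem_range.mpr (by omega)))
  obtain ⟨jj, hjj1, hjj2⟩ : ∃ jj, jj ≤ n ∧ DD x jj = m := by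
    have hmem := Finset.min'_mem _ hTne
    rw [Finset.mem_image] at hmem
    obtain ⟨a, ha, hb⟩ := hmem
    exact ⟨a, by rw [Finset.mem_range] at ha; omega, hb⟩
  have hDD0 : DD x 0 = 0 := by simp [DD, SS, UU]
  have hAA0 : AA x 0 = 0 := by simp [AA, SS, UU]
  have hd2 : (2:ℤ) ≤ d := by
    rcases hx 0 hn with h0 | h0 | h0
    · have := (hsingle 0 hn).2 (by rw [h0]; norm_num); omega
    · have := (hsingle 0 hn).1 h0; omega
    · have := (hsingle 0 hn).2 (by rw [h0]; norm_num); omega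
  have hlo : m - 1 ≤ 0 := by have := hm1 0 (by omega); omega
  have hhi : (0:ℤ) ≤ m - 1 + d := by
    rcases Nat.eq_zero_or_pos jj with h0 | h0
    · rw [h0] at hjj2; omega
    · have := (hAD 0 jj h0 hjj1).2; omega
  have hup : ∀ k < n, x k = 1 → AA x k ≤ (m - 1 + d) - 1 ∧
      ∀ i ≤ k, AA x k - AA x i ≤ (m - 1 + d) - (m - 1) - 3 := by
    intro k hk hxk
    have h4 : (4:ℤ) ≤ d := (hsingle k hk).2 (by rw [hxk]; norm_num)
    constructor
    · rcases lt_trichotomy k jj with h | h | h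
      · have h5 := (hAD k jj h hjj1).2
        have h6 := AA_le_DD x k
        omega
      · have h5 : DD x k = m := by rw [h]; exact hjj2
        have h6 := AA_le_DD x k
        omega
      · have h5 := (hAD jj k h (by omega)).1
        have h6 := AA_le_DD x jj
        omega
    · intro i hi
      rcases Nat.lt_or_ge i k with h | h
      · have := (hAD i k h (by omega)).1; omega
      · have hik : i = k := by omega
        rw [hik]; omega
  have hdn : ∀ k < n, x k = -1 → (m - 1) + 1 ≤ DD x k ∧
      ∀ i ≤ k, DD x i - DD x k ≤ (m - 1 + d) - (m - 1) - 3 := by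
    intro k hk hxk
    have h4 : (4:ℤ) ≤ d := (hsingle k hk).2 (by rw [hxk]; norm_num)
    refine ⟨by have := hm1 k (by omega); omega, ?_⟩
    intro i hi
    rcases Nat.lt_or_ge i k with h | h
    · have := (hAD i k h (by omega)).2; omega
    · have hik : i = k := by omega
      rw [hik]; omega
  obtain ⟨P, hP1, hP2⟩ := key x (m-1) (m-1+d) n hlo hhi (by omega) hx hup hdn
  refine ⟨fun k => if k < n then P (k+1) - P k else 1, ?_, ?_, ?_⟩
  · intro h hh
    dsimp only
    rw [if_pos hh]
    by_cases hz : x h = 0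
    · rcases (hP1 h hh).1 hz with h1 | h1
      · exact Or.inr h1
      · exact Or.inl h1
    · have hstep := (hP1 h hh).2 hz
      rcases hx h hh with h1 | h1 | h1
      · left; rw [hstep, h1]; ring
      · exact absurd h1 hz
      · right; rw [hstep, h1]; ring
  · intro h hh hz
    dsimp only
    rw [if_pos hh, (hP1 h hh).2 hz]; ring
  · intro i j hij hjn
    have hy : ∀ h ∈ Finset.Icc i j, (if h < n then P (h+1) - P h else 1) = P (h+1) - P h := by
      intro h hmem
      rw [Finset.mem_Icc] at hmem
      rw [if_pos (by omega)]
    rw [Finset.sum_congr rfl hy, ← Finset.Ico_add_one_right_eq_Icc, Finset.sum_Ico_eq_sub _ (by omega),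
        Finset.sum_range_sub, Finset.sum_range_sub]
    have b1 := hP2 i (by omega)
    have b2 := hP2 (j+1) (by omega)
    rw [abs_le]
    constructor <;> omega
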